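/- Let τ1={nop,inp} and τ={nop,res,swap} ∪ ω with ω ⊆ {inp,used,free}. A loop-free initialized transition system A has the τ1-SSP if and only if its oneway loop-extension C has the τ-SSP. -/

import Mathlib

/-!  Common framework: Boolean types of nets, transition systems (as labeled
edge relations), τ-regions, state separation. -/

inductive Interaction : Type
  | nop | inp | out | res | set | swap | used | free
  deriving DecidableEq

/-- The partial function on `{0,1}` (encoded as `Bool`, `false = 0`, `true = 1`)
defined by a Boolean interaction. -/
def Interaction.eval : Interaction → Bool → Option Bool
  | .nop, x => some x
  | .inp, true => some false
  | .inp, false => none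
  | .out, false => some true
  | .out, true => none
  | .res, _ => some false
  | .set, _ => some true
  | .swap, x => some (!x)
  | .used, true => some true
  | .used, false => none
  | .free, false => some false
  | .free, true => none

/-- `(sup, sig)` is a `τ`-region of the transition system given by the labeled
edge relation `edge`. -/
def IsRegion {S E : Type} (edge : S → E → S → Prop) (τ : Set Interaction)
    (sup : S → Bool) (sig : E → Interaction) : Prop :=
  (∀ e, sig e ∈ τ) ∧
    ∀ s e s', edge s e s' → (sig e).eval (sup s) = some (sup s')

/-- The `τ`-state separation property: every pair of distinct states (SSP atom)
is solved by some `τ`-region. -/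
def HasSSP {S E : Type} (edge : S → E → S → Prop) (τ : Set Interaction) : Prop :=
  ∀ s s' : S, s ≠ s' → ∃ sup sig, IsRegion edge τ sup sig ∧ sup s ≠ sup s'

def Deterministic {S E : Type} (edge : S → E → S → Prop) : Prop :=
  ∀ s e s₁ s₂, edge s e s₁ → edge s e s₂ → s₁ = s₂

inductive Reachable {S E : Type} (edge : S → E → S → Prop) : S → S → Prop
  | refl (s : S) : Reachable edge s s
  | tail {s t u : S} {e : E} : Reachable edge s t → edge t e u → Reachable edge s u

/-- `ι` is an initial state from which every state is reachable. -/
def Initialized {S E : Type} (edge : S → E → S → Prop) (ι : S) : Prop :=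
  ∀ s, Reachable edge ι s

def LoopFree {S E : Type} (edge : S → E → S → Prop) : Prop :=
  ∀ s e s', edge s e s' → s ≠ s'

def BiDirected {S E : Type} (edge : S → E → S → Prop) : Prop :=
  LoopFree edge ∧ ∀ s e s', edge s e s' → edge s' e s

/-- A region is normalized (for a `nop`-equipped type): no event has signature
`used` or `free`, and every event with signature in `{inp,out,res,set,swap}`
has an edge on which the support changes. -/
def Normalized {S E : Type} (edge : S → E → S → Prop)
    (sup : S → Bool) (sig : E → Interaction) : Prop :=
  ∀ e, (sig e ≠ Interaction.used ∧ sig e ≠ Interaction.free) ∧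
    ((sig e = Interaction.inp ∨ sig e = Interaction.out ∨ sig e = Interaction.res ∨
        sig e = Interaction.set ∨ sig e = Interaction.swap) →
      ∃ s s', edge s e s' ∧ sup s ≠ sup s')

/-- save = save₁ ∪ save₀ = {nop,set,used} ∪ {nop,res,free}. -/
def saveSet : Set Interaction :=
  {Interaction.nop, Interaction.set, Interaction.used, Interaction.res, Interaction.free}

/-- The backward-extension `B` of a loop-free TS `A`: events are `E ⊕ E`
(`Sum.inl e` is `e`, `Sum.inr e` is the fresh event `ē`); every edge
`s →e s'` of `A` yields the edges `s →e s'` and `s' →ē s`. -/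
def backwardExt {S E : Type} (edge : S → E → S → Prop) : S → E ⊕ E → S → Prop
  | s, Sum.inl e, s' => edge s e s'
  | s, Sum.inr e, s' => edge s' e s

/-- The oneway loop-extension `C` of a loop-free TS `A`: every edge `s →e s'`
of `A` yields the edges `s →e s'`, `s' →ē s` and the loop `s' →e s'`. -/
def onewayLoopExt {S E : Type} (edge : S → E → S → Prop) : S → E ⊕ E → S → Prop
  | s, Sum.inl e, s' => edge s e s' ∨ (s = s' ∧ ∃ q, edge q e s')
  | s, Sum.inr e, s' => edge s' e s

/-- The loop-extension `D` of a loop-free TS `A`: every edge `s →e s'` of `A`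
yields the edges `s →e s'`, `s' →ē s` and the loops `s' →e s'` and `s →ē s`. -/
def loopExt {S E : Type} (edge : S → E → S → Prop) : S → E ⊕ E → S → Prop
  | s, Sum.inl e, s' => edge s e s' ∨ (s = s' ∧ ∃ q, edge q e s')
  | s, Sum.inr e, s' => edge s' e s ∨ (s = s' ∧ ∃ q, edge s e q)

instance : Fintype Interaction :=
  ⟨{Interaction.nop, Interaction.inp, Interaction.out, Interaction.res, Interaction.set,
    Interaction.swap, Interaction.used, Interaction.free}, fun x => by cases x <;> decide⟩

/-- for `τ₁ = {nop,inp}` and `τ = {nop,res,swap} ∪ ω` with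
`ω ⊆ {inp,used,free}`, a loop-free initialized TS `A` has the `τ₁`-SSP iff its
oneway loop-extension `C` has the `τ`-SSP. -/
theorem oneway_loop_extension_ssp
    {S E : Type} [Finite S] [Finite E]
    (edge : S → E → S → Prop) (hdet : Deterministic edge)
    (ι : S) (hinit : Initialized edge ι) (hlf : LoopFree edge)
    (ω : Set Interaction)
    (hω : ω ⊆ {Interaction.inp, Interaction.used, Interaction.free}) :
    HasSSP edge {Interaction.nop, Interaction.inp} ↔
      HasSSP (onewayLoopExt edge)
        ({Interaction.nop, Interaction.res, Interaction.swap} ∪ ω) := by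
  have keyInp : ∀ x y : Bool, Interaction.inp.eval x = some y → x = true ∧ y = false := by
    decide
  have keyNop : ∀ x y : Bool, Interaction.nop.eval x = some y → x = y := by decide
  have key : ∀ (i j : Interaction) (bt bt' ba bb : Bool),
      i ≠ Interaction.set → i ≠ Interaction.out →
      j ≠ Interaction.set → j ≠ Interaction.out →
      i.eval bt = some bt' → i.eval bt' = some bt' → i.eval ba = some bb →
      j.eval bt' = some bt → j.eval bb = some ba → bt ≠ bt' →
      ba = true ∧ bb = false := by decide
  classical
  constructor
  · intro hA a b hab
    obtain ⟨sup, sig, ⟨hmem, hreg⟩, hsep⟩ := hA a b hab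
    refine ⟨sup, Sum.elim
        (fun e => if sig e = Interaction.inp then Interaction.res else Interaction.nop)
        (fun e => if sig e = Interaction.inp then Interaction.swap else Interaction.nop),
      ⟨?_, ?_⟩, hsep⟩
    · rintro (e | e) <;> dsimp <;> split <;> simp
    · rintro s (e | e) s' h
      · simp only [onewayLoopExt] at h
        have hm := hmem e
        simp only [Set.mem_insert_iff, Set.mem_singleton_iff] at hm
        rcases h with h | ⟨heq, q, hq⟩
        · have h1 := hreg s e s' h
          rcases hm with hm | hm <;> rw [hm] at h1 <;>
            simp only [Sum.elim_inl, hm, reduceCtorEq, ite_false, ite_true]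
          · have hxy := keyNop _ _ h1
            simp [Interaction.eval, hxy]
          · obtain ⟨hx, hy⟩ := keyInp _ _ h1
            simp [hx, hy, Interaction.eval]
        · subst heq
          have h1 := hreg _ e _ hq
          rcases hm with hm | hm <;> rw [hm] at h1 <;>
            simp only [Sum.elim_inl, hm, reduceCtorEq, ite_false, ite_true]
          · simp [Interaction.eval]
          · obtain ⟨hx, hy⟩ := keyInp _ _ h1
            simp [hy, Interaction.eval]
      · simp only [onewayLoopExt] at h
        have h1 := hreg s' e s h
        have hm := hmem e
        simp only [Set.mem_insert_iff, Set.mem_singleton_iff] at hm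
        rcases hm with hm | hm <;> rw [hm] at h1 <;>
          simp only [Sum.elim_inr, hm, reduceCtorEq, ite_false, ite_true]
        · have hxy := keyNop _ _ h1
          simp [Interaction.eval, hxy]
        · obtain ⟨hx, hy⟩ := keyInp _ _ h1
          simp [hx, hy, Interaction.eval]
  · intro hC a b hab
    obtain ⟨sup, sig, ⟨hmem, hreg⟩, hsep⟩ := hC a b hab
    refine ⟨sup,
      fun e => if ∃ p q, edge p e q ∧ sup p ≠ sup q then Interaction.inp
        else Interaction.nop, ⟨?_, ?_⟩, hsep⟩
    · intro e; dsimp only; split <;> simp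
    · intro p e q hpq
      dsimp only
      split
      · next h =>
        obtain ⟨t, t', htt, hne⟩ := h
        have notso : ∀ f, sig f ≠ Interaction.set ∧ sig f ≠ Interaction.out := by
          intro f
          rcases hmem f with hf | hf
          · simp only [Set.mem_insert_iff, Set.mem_singleton_iff] at hf
            rcases hf with hf | hf | hf <;> simp [hf]
          · have hf' := hω hf
            simp only [Set.mem_insert_iff, Set.mem_singleton_iff] at hf'
            rcases hf' with hf' | hf' | hf' <;> simp [hf']
        have f1 : (sig (Sum.inl e)).eval (sup t) = some (sup t') :=
          hreg t (Sum.inl e) t' (Or.inl htt)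
        have f2 : (sig (Sum.inl e)).eval (sup t') = some (sup t') :=
          hreg t' (Sum.inl e) t' (Or.inr ⟨rfl, t, htt⟩)
        have f3 : (sig (Sum.inl e)).eval (sup p) = some (sup q) :=
          hreg p (Sum.inl e) q (Or.inl hpq)
        have f5 : (sig (Sum.inr e)).eval (sup t') = some (sup t) :=
          hreg t' (Sum.inr e) t htt
        have f6 : (sig (Sum.inr e)).eval (sup q) = some (sup p) :=
          hreg q (Sum.inr e) p hpq
        obtain ⟨hx, hy⟩ := key _ _ _ _ _ _ (notso _).1 (notso _).2
          (notso _).1 (notso _).2 f1 f2 f3 f5 f6 hne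
        simp [hx, hy, Interaction.eval]
      · next h =>
        have hs : sup p = sup q := by
          by_contra hne; exact h ⟨p, q, hpq, hne⟩
        simp [hs, Interaction.eval]
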